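/- Let m ≥ 1 be an integer, define G(x) = ∫₀^x m |sin s| ds, and let u : (0,∞) → ℝ be locally absolutely continuous. Then for all 0 < r₁ < r₂ < ∞, |G(u(r₂)) − G(u(r₁))| ≤ (1/2) ∫_{r₁}^{r₂} (u'(r)² + m² sin²(u(r))/r²) r dr. -/

import Mathlib

open MeasureTheory Filter Set
open scoped ENNReal

/-- Local absolute continuity on `(0,∞)`: the fundamental theorem of calculus holds
on every compact subinterval. -/
def LocAC (u : ℝ → ℝ) : Prop :=
  ∀ a b : ℝ, 0 < a → a ≤ b →
    IntervalIntegrable (deriv u) volume a b ∧ u b - u a = ∫ r in a..b, deriv u r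

/-- The partial-energy functional `G(x) = ∫₀^x m |sin s| ds`. -/
noncomputable def Gfun (m : ℕ) (x : ℝ) : ℝ := ∫ s in (0:ℝ)..x, (m:ℝ) * |Real.sin s|

lemma msin_cont (m : ℕ) : Continuous fun s => (m:ℝ) * |Real.sin s| := by
  continuity

lemma Gfun_sub (m : ℕ) (a b : ℝ) :
    Gfun m b - Gfun m a = ∫ s in a..b, (m:ℝ) * |Real.sin s| := by
  rw [Gfun, Gfun]
  exact intervalIntegral.integral_interval_sub_left
    ((msin_cont m).intervalIntegrable 0 b) ((msin_cont m).intervalIntegrable 0 a)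

lemma Gfun_lip (m : ℕ) (a b : ℝ) : |Gfun m b - Gfun m a| ≤ (m:ℝ) * |b - a| := by
  rw [Gfun_sub]
  have h := intervalIntegral.norm_integral_le_of_norm_le_const
    (C := (m:ℝ)) (f := fun s => (m:ℝ) * |Real.sin s|) (a := a) (b := b) ?_
  · simpa [Real.norm_eq_abs, abs_mul, Nat.abs_cast] using h
  · intro x _
    rw [Real.norm_eq_abs, abs_mul, Nat.abs_cast, abs_abs]
    calc (m:ℝ) * |Real.sin x| ≤ (m:ℝ) * 1 := by
          apply mul_le_mul_of_nonneg_left _ (by positivity)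
          exact abs_le.mpr ⟨Real.neg_one_le_sin x, Real.sin_le_one x⟩
      _ = m := mul_one _

/-- The localized energy bound `|G(u(r₂)) − G(u(r₁))| ≤ E^{r₂}_{r₁}(u)`, the localized
energy being interpreted in the extended-real sense. -/
theorem G_localized_energy_bound
    (m : ℕ) (hm : 1 ≤ m) (u : ℝ → ℝ) (hAC : LocAC u)
    (r₁ r₂ : ℝ) (h₁ : 0 < r₁) (h₂ : r₁ < r₂) :
    ENNReal.ofReal |Gfun m (u r₂) - Gfun m (u r₁)| ≤
      (1/2 : ℝ≥0∞) * ∫⁻ r in Set.Ioc r₁ r₂,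
        ENNReal.ofReal ((deriv u r ^ 2 + (m:ℝ)^2 * Real.sin (u r) ^ 2 / r ^ 2) * r) := by
  have hle : r₁ ≤ r₂ := h₂.le
  set g : ℝ → ℝ := deriv u with hgdef
  obtain ⟨hgi, hu⟩ := hAC r₁ r₂ h₁ hle
  have hgI : IntegrableOn g (Ioc r₁ r₂) :=
    (intervalIntegrable_iff_integrableOn_Ioc_of_le hle).mp hgi
  -- continuity of u on [r₁, r₂]
  have huEq : ∀ t ∈ Icc r₁ r₂, u t = u r₁ + ∫ s in r₁..t, g s := by
    intro t ht
    have := (hAC r₁ t h₁ ht.1).2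
    linarith
  have huCont : ContinuousOn u (Icc r₁ r₂) := by
    have hIcc : IntegrableOn g (uIcc r₁ r₂) := by
      rw [uIcc_of_le hle, integrableOn_Icc_iff_integrableOn_Ioc]
      exact hgI
    have hprim : ContinuousOn (fun t => u r₁ + ∫ s in r₁..t, g s) (Icc r₁ r₂) := by
      have := intervalIntegral.continuousOn_primitive_interval (a := r₁) (b := r₂) hIcc
      rw [uIcc_of_le hle] at this
      exact continuousOn_const.add this
    exact hprim.congr huEq
  have humeas : AEStronglyMeasurable u (volume.restrict (Ioc r₁ r₂)) :=
    (huCont.mono Ioc_subset_Icc_self).aestronglyMeasurable measurableSet_Ioc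
  -- the intermediate integrand and its integrability
  set I : ℝ := ∫ r in Ioc r₁ r₂, (m:ℝ) * |Real.sin (u r)| * |g r| with hIdef
  have hIint : IntegrableOn (fun r => (m:ℝ) * |Real.sin (u r)| * |g r|) (Ioc r₁ r₂) := by
    apply Integrable.bdd_mul (c := (m:ℝ)) hgI.abs
    · exact ((msin_cont m).comp_aestronglyMeasurable humeas)
    · refine Eventually.of_forall fun x => ?_
      rw [Real.norm_eq_abs, abs_mul, Nat.abs_cast, abs_abs]
      calc (m:ℝ) * |Real.sin (u x)| ≤ (m:ℝ) * 1 := by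
            apply mul_le_mul_of_nonneg_left _ (by positivity)
            exact abs_le.mpr ⟨Real.neg_one_le_sin _, Real.sin_le_one _⟩
        _ = m := mul_one _
  -- main real inequality
  have key : |Gfun m (u r₂) - Gfun m (u r₁)| ≤ I := by
    refine le_of_forall_pos_le_add fun ε hε => ?_
    have hJ0 : (0:ℝ) ≤ ∫ r in Ioc r₁ r₂, |g r| := integral_nonneg fun _ => abs_nonneg _
    set J : ℝ := ∫ r in Ioc r₁ r₂, |g r| with hJdef
    set C : ℝ := (m:ℝ) * (2 + J) + 1 with hCdef
    have hC : 0 < C := by positivity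
    set δ : ℝ := ε / C with hδdef
    have hδ : 0 < δ := div_pos hε hC
    -- approximate g by a continuous function
    set g0 : ℝ → ℝ := (Ioc r₁ r₂).indicator g with hg0def
    have hg0 : Integrable g0 := (integrable_indicator_iff measurableSet_Ioc).mpr hgI
    obtain ⟨h, -, hhδ, hhcont, hhint⟩ := hg0.exists_hasCompactSupport_integral_sub_le hδ
    -- ∫ |g - h| ≤ δ on subintervals
    have hsub : ∀ t ∈ Icc r₁ r₂, (∫ s in r₁..t, |g s - h s|) ≤ δ := by
      intro t ht
      rw [intervalIntegral.integral_of_le ht.1]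
      have h1 : EqOn (fun s => |g s - h s|) (fun s => ‖g0 s - h s‖) (Ioc r₁ t) := by
        intro s hs
        have hmem : s ∈ Ioc r₁ r₂ := ⟨hs.1, hs.2.trans ht.2⟩
        simp only [Real.norm_eq_abs, hg0def, indicator_of_mem hmem]
      calc (∫ s in Ioc r₁ t, |g s - h s|) = ∫ s in Ioc r₁ t, ‖g0 s - h s‖ :=
            setIntegral_congr_fun measurableSet_Ioc h1
        _ ≤ ∫ s, ‖g0 s - h s‖ := setIntegral_le_integral (hg0.sub hhint).norm
            (Eventually.of_forall fun _ => norm_nonneg _)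
        _ ≤ δ := hhδ
    -- the C¹ approximation v
    set v : ℝ → ℝ := fun t => u r₁ + ∫ s in r₁..t, h s with hvdef
    have hvderiv : ∀ x : ℝ, HasDerivAt v (h x) x := by
      intro x
      have := intervalIntegral.integral_hasDerivAt_right
        (hhcont.intervalIntegrable r₁ x)
        (hhcont.stronglyMeasurableAtFilter _ _) hhcont.continuousAt
      exact this.const_add (u r₁)
    have hvCont : Continuous v := continuous_iff_continuousAt.mpr fun x => (hvderiv x).continuousAt
    have hv1 : v r₁ = u r₁ := by simp [hvdef]
    have hvu : ∀ t ∈ Icc r₁ r₂, |v t - u t| ≤ δ := by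
      intro t ht
      obtain ⟨hti, hteq⟩ := hAC r₁ t h₁ ht.1
      have h3 : v t - u t = ∫ s in r₁..t, (h s - g s) := by
        rw [intervalIntegral.integral_sub (hhcont.intervalIntegrable _ _) hti, hvdef]
        simp only
        linarith
      rw [h3]
      calc |∫ s in r₁..t, (h s - g s)| ≤ ∫ s in r₁..t, |h s - g s| :=
            intervalIntegral.abs_integral_le_integral_abs ht.1
        _ = ∫ s in r₁..t, |g s - h s| := by simp_rw [abs_sub_comm]
        _ ≤ δ := hsub t ht
    -- chain rule for v
    have hchain : Gfun m (v r₂) - Gfun m (v r₁)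
        = ∫ x in r₁..r₂, ((fun s => (m:ℝ) * |Real.sin s|) ∘ v) x * h x := by
      rw [Gfun_sub]
      exact (intervalIntegral.integral_comp_mul_deriv (fun x _ => hvderiv x)
        hhcont.continuousOn (msin_cont m)).symm
    -- estimate
    have hK : (∫ s in Ioc r₁ r₂, |h s - g s|) ≤ δ := by
      have := hsub r₂ (right_mem_Icc.mpr hle)
      rw [intervalIntegral.integral_of_le hle] at this
      simpa [abs_sub_comm] using this
    have hKint : IntegrableOn (fun s => |h s - g s|) (Ioc r₁ r₂) :=
      (hhint.integrableOn.sub hgI).abs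
    have hmain : |Gfun m (v r₂) - Gfun m (v r₁)| ≤ I + (m:ℝ) * δ * J + (m:ℝ) * δ := by
      have hPW : ∀ x ∈ Ioc r₁ r₂,
          |((fun s => (m:ℝ) * |Real.sin s|) ∘ v) x * h x|
            ≤ (m:ℝ) * |Real.sin (u x)| * |g x| + (m:ℝ) * δ * |g x| + (m:ℝ) * |h x - g x| := by
        intro x hx
        have hxI : x ∈ Icc r₁ r₂ := Ioc_subset_Icc_self hx
        have hsv : |Real.sin (v x)| ≤ |Real.sin (u x)| + δ := by
          have hl : |Real.sin (v x) - Real.sin (u x)| ≤ |v x - u x| := by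
            rw [Real.sin_sub_sin]
            calc |2 * Real.sin ((v x - u x)/2) * Real.cos ((v x + u x)/2)|
                = 2 * |Real.sin ((v x - u x)/2)| * |Real.cos ((v x + u x)/2)| := by
                  rw [abs_mul, abs_mul, abs_two]
              _ ≤ 2 * |(v x - u x)/2| * 1 := by
                  have h1 := Real.abs_sin_le_abs (x := (v x - u x)/2)
                  have h2 := Real.abs_cos_le_one ((v x + u x)/2)
                  have h3 : (0:ℝ) ≤ |Real.sin ((v x - u x)/2)| := abs_nonneg _
                  have h4 : (0:ℝ) ≤ |(v x - u x)/2| := abs_nonneg _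
                  nlinarith
              _ = |v x - u x| := by rw [abs_div, abs_two]; ring
          calc |Real.sin (v x)|
              = |Real.sin (u x) + (Real.sin (v x) - Real.sin (u x))| := by ring_nf
            _ ≤ |Real.sin (u x)| + |Real.sin (v x) - Real.sin (u x)| := abs_add_le _ _
            _ ≤ |Real.sin (u x)| + |v x - u x| := by linarith
            _ ≤ |Real.sin (u x)| + δ := by linarith [hvu x hxI]
        have hsv1 : |Real.sin (v x)| ≤ 1 :=
          abs_le.mpr ⟨Real.neg_one_le_sin _, Real.sin_le_one _⟩
        have habs : |((fun s => (m:ℝ) * |Real.sin s|) ∘ v) x * h x|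
            = (m:ℝ) * |Real.sin (v x)| * |h x| := by
          simp [Function.comp, abs_mul, Nat.abs_cast, abs_abs]
        rw [habs]
        calc (m:ℝ) * |Real.sin (v x)| * |h x|
            ≤ (m:ℝ) * |Real.sin (v x)| * (|g x| + |h x - g x|) := by
              apply mul_le_mul_of_nonneg_left _ (by positivity)
              calc |h x| = |g x + (h x - g x)| := by ring_nf
                _ ≤ |g x| + |h x - g x| := abs_add_le _ _
          _ = (m:ℝ) * |Real.sin (v x)| * |g x|
              + (m:ℝ) * |Real.sin (v x)| * |h x - g x| := by ring
          _ ≤ (m:ℝ) * (|Real.sin (u x)| + δ) * |g x| + (m:ℝ) * 1 * |h x - g x| := by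
              gcongr
          _ = (m:ℝ) * |Real.sin (u x)| * |g x| + (m:ℝ) * δ * |g x|
              + (m:ℝ) * |h x - g x| := by ring
      have hLcont : Continuous fun x => |((fun s => (m:ℝ) * |Real.sin s|) ∘ v) x * h x| :=
        (((msin_cont m).comp hvCont).mul hhcont).abs
      have hRint : IntegrableOn (fun x => (m:ℝ) * |Real.sin (u x)| * |g x|
          + (m:ℝ) * δ * |g x| + (m:ℝ) * |h x - g x|) (Ioc r₁ r₂) :=
        (hIint.add (hgI.abs.const_mul ((m:ℝ) * δ))).add (hKint.const_mul (m:ℝ))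
      have step : (∫ x in Ioc r₁ r₂, |((fun s => (m:ℝ) * |Real.sin s|) ∘ v) x * h x|)
          ≤ ∫ x in Ioc r₁ r₂, ((m:ℝ) * |Real.sin (u x)| * |g x|
            + (m:ℝ) * δ * |g x| + (m:ℝ) * |h x - g x|) :=
        setIntegral_mono_on hLcont.integrableOn_Ioc hRint measurableSet_Ioc hPW
      have hsplit : (∫ x in Ioc r₁ r₂, ((m:ℝ) * |Real.sin (u x)| * |g x|
            + (m:ℝ) * δ * |g x| + (m:ℝ) * |h x - g x|))
          = I + (m:ℝ) * δ * J + (m:ℝ) * (∫ x in Ioc r₁ r₂, |h x - g x|) := by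
        have hA : IntegrableOn (fun x => (m:ℝ) * |Real.sin (u x)| * |g x|
            + (m:ℝ) * δ * |g x|) (Ioc r₁ r₂) := hIint.add (hgI.abs.const_mul _)
        have hB : IntegrableOn (fun x => (m:ℝ) * δ * |g x|) (Ioc r₁ r₂) :=
          hgI.abs.const_mul _
        have hCi : IntegrableOn (fun x => (m:ℝ) * |h x - g x|) (Ioc r₁ r₂) :=
          hKint.const_mul _
        rw [integral_add hA hCi, integral_add hIint hB, integral_const_mul,
          integral_const_mul]
      have hmK : (m:ℝ) * (∫ x in Ioc r₁ r₂, |h x - g x|) ≤ (m:ℝ) * δ :=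
        mul_le_mul_of_nonneg_left hK (by positivity)
      rw [hchain]
      calc |∫ x in r₁..r₂, ((fun s => (m:ℝ) * |Real.sin s|) ∘ v) x * h x|
          ≤ ∫ x in r₁..r₂, |((fun s => (m:ℝ) * |Real.sin s|) ∘ v) x * h x| :=
            intervalIntegral.abs_integral_le_integral_abs hle
        _ = ∫ x in Ioc r₁ r₂, |((fun s => (m:ℝ) * |Real.sin s|) ∘ v) x * h x| :=
            intervalIntegral.integral_of_le hle
        _ ≤ I + (m:ℝ) * δ * J + (m:ℝ) * (∫ x in Ioc r₁ r₂, |h x - g x|) := by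
            rw [← hsplit]; exact step
        _ ≤ I + (m:ℝ) * δ * J + (m:ℝ) * δ := by linarith

    have e1 : |Gfun m (u r₂) - Gfun m (u r₁)|
        ≤ (m:ℝ) * δ + |Gfun m (v r₂) - Gfun m (v r₁)| := by
      have e2 : |Gfun m (u r₂) - Gfun m (v r₂)| ≤ (m:ℝ) * δ := by
        calc |Gfun m (u r₂) - Gfun m (v r₂)| ≤ (m:ℝ) * |u r₂ - v r₂| := Gfun_lip m _ _
          _ ≤ (m:ℝ) * δ := by
              apply mul_le_mul_of_nonneg_left _ (by positivity)
              rw [abs_sub_comm]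
              exact hvu r₂ (right_mem_Icc.mpr hle)
      calc |Gfun m (u r₂) - Gfun m (u r₁)|
          = |(Gfun m (u r₂) - Gfun m (v r₂)) + (Gfun m (v r₂) - Gfun m (v r₁))| := by
            rw [hv1]; ring_nf
        _ ≤ |Gfun m (u r₂) - Gfun m (v r₂)| + |Gfun m (v r₂) - Gfun m (v r₁)| := abs_add_le _ _
        _ ≤ (m:ℝ) * δ + |Gfun m (v r₂) - Gfun m (v r₁)| := by linarith [e2]
    have hδC : δ * C = ε := div_mul_cancel₀ ε hC.ne'
    calc |Gfun m (u r₂) - Gfun m (u r₁)|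
        ≤ (m:ℝ) * δ + (I + (m:ℝ) * δ * J + (m:ℝ) * δ) := by linarith
      _ = I + δ * ((m:ℝ) * (2 + J)) := by ring
      _ ≤ I + δ * C := by nlinarith [hδ.le]
      _ = I + ε := by rw [hδC]

  -- pass to ENNReal
  have h1 := ENNReal.ofReal_le_ofReal key
  rw [hIdef, ofReal_integral_eq_lintegral_ofReal hIint
    (Eventually.of_forall fun x => by positivity)] at h1
  refine h1.trans ?_
  rw [← lintegral_const_mul' (1/2 : ℝ≥0∞) _ (by norm_num)]
  refine setLIntegral_mono' measurableSet_Ioc fun r hr => ?_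
  have hr0 : 0 < r := h₁.trans hr.1
  have hpt : (m:ℝ) * |Real.sin (u r)| * |g r| ≤
      (1/2) * ((g r ^ 2 + (m:ℝ)^2 * Real.sin (u r) ^ 2 / r ^ 2) * r) := by
    have h2r : (0:ℝ) < 2 * r := by linarith
    rw [show (1/2) * ((g r ^ 2 + (m:ℝ)^2 * Real.sin (u r) ^ 2 / r ^ 2) * r)
        = ((g r)^2 * r^2 + (m:ℝ)^2 * Real.sin (u r)^2) / (2*r) from by field_simp]
    rw [le_div_iff₀ h2r]
    nlinarith [sq_nonneg (|g r| * r - (m:ℝ) * |Real.sin (u r)|), sq_abs (g r),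
      sq_abs (Real.sin (u r)), abs_nonneg (g r), abs_nonneg (Real.sin (u r))]
  calc ENNReal.ofReal ((m:ℝ) * |Real.sin (u r)| * |g r|)
      ≤ ENNReal.ofReal ((1/2) * ((g r ^ 2 + (m:ℝ)^2 * Real.sin (u r) ^ 2 / r ^ 2) * r)) :=
        ENNReal.ofReal_le_ofReal hpt
    _ = (1/2 : ℝ≥0∞) * ENNReal.ofReal ((g r ^ 2 + (m:ℝ)^2 * Real.sin (u r) ^ 2 / r ^ 2) * r) := by
        rw [ENNReal.ofReal_mul (by norm_num)]
        congr 1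
        rw [ENNReal.ofReal_div_of_pos (by norm_num)]
        norm_num
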